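/- Combining both scattering-matrix symmetries: if z₀ ∈ ℂ \ {0} satisfies s₁₁(z₀) = 0, then s₂₂(z₀*) = 0, s₂₂(-q₀²/z₀) = 0, and s₁₁(-q₀²/z₀*) = 0. Hence discrete eigenvalues occur in quartets {z₀, z₀*, -q₀²/z₀, -q₀²/z₀*}. -/

import Mathlib

/-- Quartet structure of discrete eigenvalues: combining both scattering-matrix
symmetries, if s₁₁(z₀) = 0 for z₀ ≠ 0 then s₂₂(z₀*) = 0, s₂₂(-q₀²/z₀) = 0 and
s₁₁(-q₀²/z₀*) = 0. -/
theorem stmt_14 (q₀ : ℝ) (hq₀ : 0 < q₀) (qp qm : ℂ)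
    (habsp : ‖qp‖ = q₀) (habsm : ‖qm‖ = q₀)
    (σ σ₃ Qp Qm : Matrix (Fin 2) (Fin 2) ℂ)
    (hσ : σ = !![0, 1; -1, 0]) (hσ₃ : σ₃ = !![1, 0; 0, -1])
    (hQp : Qp = !![0, qp; -(starRingEnd ℂ qp), 0])
    (hQm : Qm = !![0, qm; -(starRingEnd ℂ qm), 0])
    (S : ℂ → Matrix (Fin 2) (Fin 2) ℂ)
    (hsym1 : ∀ z : ℂ, (S (starRingEnd ℂ z)).map (starRingEnd ℂ) = -σ * S z * σ)
    (hsym2 : ∀ z : ℂ, z ≠ 0 →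
      S (-(q₀ : ℂ)^2 / z) = σ₃ * Qm * S z * (σ₃ * Qp)⁻¹)
    (z₀ : ℂ) (hz₀ : z₀ ≠ 0) (hzero : S z₀ 0 0 = 0) :
    S (starRingEnd ℂ z₀) 1 1 = 0 ∧
    S (-(q₀ : ℂ)^2 / z₀) 1 1 = 0 ∧
    S (-(q₀ : ℂ)^2 / starRingEnd ℂ z₀) 0 0 = 0 := by
  have hq₀' : ((q₀ : ℂ))^2 ≠ 0 := by
    simp [pow_eq_zero_iff, Complex.ofReal_eq_zero, hq₀.ne']
  have hqpconj : starRingEnd ℂ qp * qp = (q₀ : ℂ)^2 := by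
    rw [mul_comm, Complex.mul_conj, ← Complex.sq_norm, habsp]
    push_cast; ring
  -- inverse of σ₃ * Qp
  have hBinv : (σ₃ * Qp)⁻¹ = !![0, qp / (q₀:ℂ)^2; starRingEnd ℂ qp / (q₀:ℂ)^2, 0] := by
    apply Matrix.inv_eq_right_inv
    rw [hσ₃, hQp]
    ext i j
    fin_cases i <;> fin_cases j <;>
      simp [Matrix.mul_apply, Fin.sum_univ_two, Matrix.one_apply] <;>
      field_simp <;> first | exact hqpconj | (rw [mul_comm]; exact hqpconj) | (rw [div_eq_one_iff_eq hq₀']; exact hqpconj) | (rw [div_eq_one_iff_eq hq₀', mul_comm]; exact hqpconj)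
  -- part 1
  have h1 : S (starRingEnd ℂ z₀) 1 1 = 0 := by
    have h := congrFun (congrFun (hsym1 z₀) 1) 1
    simp only [Matrix.map_apply, hσ, Matrix.mul_apply, Fin.sum_univ_two] at h
    simp [Matrix.neg_mul, Matrix.mul_apply, Fin.sum_univ_two, hσ, hzero] at h ⊢
    exact h
  -- part 2
  have h2 : S (-(q₀ : ℂ)^2 / z₀) 1 1 = 0 := by
    have h := congrFun (congrFun (hsym2 z₀ hz₀) 1) 1
    rw [hBinv, hσ₃, hQm] at h
    simp [Matrix.mul_apply, Fin.sum_univ_two, Matrix.vecMul, dotProduct, Matrix.vecHead, hzero] at h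
    exact h
  -- part 3
  have h3 : S (-(q₀ : ℂ)^2 / starRingEnd ℂ z₀) 0 0 = 0 := by
    have hc : -(q₀ : ℂ)^2 / starRingEnd ℂ z₀ = starRingEnd ℂ (-(q₀ : ℂ)^2 / z₀) := by
      simp [map_div₀, map_neg, map_pow, Complex.conj_ofReal]
    rw [hc]
    have h := congrFun (congrFun (hsym1 (-(q₀ : ℂ)^2 / z₀)) 0) 0
    simp only [Matrix.map_apply, hσ, Matrix.mul_apply, Fin.sum_univ_two] at h
    simp [Matrix.neg_mul, Matrix.mul_apply, Fin.sum_univ_two, hσ, h2] at h ⊢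
    exact h
  exact ⟨h1, h2, h3⟩
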